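/- Let p : X ⥤ D be a functor of categories and consider the first projection P : Comma (𝟭 D) p ⥤ D. A morphism (g, h) : (d, x, u) ⟶ (d', x', u') in Comma (𝟭 D) p is cartesian with respect to P if and only if h : x ⟶ x' is an isomorphism in X. -/

import Mathlib

open CategoryTheory

/-- A morphism `φ = (g, h) : (d, x, u) ⟶ (d', x', u')` in `Comma (𝟭 D) p` is cartesian with
respect to the first projection (every `ψ` into the same target lying over a factorization
`g₀ ≫ g` factors uniquely through `φ` via a morphism over `g₀`) if and only if its second
component `h` is an isomorphism in `X`. -/
theorem comma_fst_cartesian_iff {X D : Type*} [Category X] [Category D] (p : X ⥤ D)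
    (A B : Comma (𝟭 D) p) (φ : A ⟶ B) :
    (∀ (Z : Comma (𝟭 D) p) (ψ : Z ⟶ B) (g₀ : Z.left ⟶ A.left),
        g₀ ≫ φ.left = ψ.left → ∃! χ : Z ⟶ A, χ.left = g₀ ∧ χ ≫ φ = ψ) ↔
      IsIso φ.right := by
  constructor
  · intro H
    -- consider Z with same left as A but right of B
    let Z : Comma (𝟭 D) p := ⟨A.left, B.right, A.hom ≫ p.map φ.right⟩
    let ψ : Z ⟶ B := ⟨φ.left, 𝟙 B.right, by
      show φ.left ≫ B.hom = (A.hom ≫ p.map φ.right) ≫ p.map (𝟙 B.right)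
      simpa using φ.w⟩
    obtain ⟨χ, ⟨hχl, hχc⟩, huniq⟩ := H Z ψ (𝟙 A.left) (Category.id_comp _)
    -- the comparison morphism A ⟶ Z
    let φ' : A ⟶ Z := ⟨𝟙 A.left, φ.right, by simp [Z]⟩
    have hr : χ.right ≫ φ.right = 𝟙 B.right := by
      have := congrArg CommaMorphism.right hχc
      simpa [ψ] using this
    -- uniqueness applied to ψ = φ itself
    obtain ⟨χ₂, ⟨hχ₂l, hχ₂c⟩, huniq₂⟩ := H A φ (𝟙 A.left) (by simp)
    have h1 : φ' ≫ χ = χ₂ := by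
      apply huniq₂
      constructor
      · simp [φ', hχl]
      · rw [Category.assoc, hχc]
        apply CommaMorphism.ext
        · simp [φ', ψ]
        · exact Category.comp_id _
    have h2 : 𝟙 A = χ₂ := by
      apply huniq₂
      constructor <;> simp
    have h3 : φ.right ≫ χ.right = 𝟙 A.right := by
      have := congrArg CommaMorphism.right (h1.trans h2.symm)
      simpa [φ'] using this
    exact ⟨χ.right, h3, hr⟩
  · intro H Z ψ g₀ hg
    have hw : g₀ ≫ A.hom = Z.hom ≫ p.map (ψ.right ≫ inv φ.right) := by
      rw [← cancel_mono (p.map φ.right)]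
      have h1 := φ.w
      have h2 := ψ.w
      simp only [Functor.id_obj, Functor.id_map] at h1 h2
      rw [Category.assoc, ← h1, ← Category.assoc, hg, h2]
      simp [← Functor.map_comp]
    refine ⟨⟨g₀, ψ.right ≫ inv φ.right, by simpa using hw⟩, ⟨rfl, ?_⟩, ?_⟩
    · apply CommaMorphism.ext
      · simpa using hg
      · simp
    · rintro χ' ⟨hl, hc⟩
      apply CommaMorphism.ext
      · simpa using hl
      · have := congrArg CommaMorphism.right hc
        simp only [Comma.comp_right] at this
        simp [← this]
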